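/- Let Σ = {0,#}, K = ({00})* (all words that are concatenations of blocks 00), Y₁ = { 0w0#0 : w ∈ Σ*, w has no factor ### }, Y₂ = { 0⁴ # 0⁵ 0^{2a} ## 0^{b} # 0⁴ 0^{2+2c} : a ≥ 0, b ≥ 1, c ≥ 1 }, Y₃ = { 0#0w0 : w ∈ Σ*, w has no factor ### }, and let L_G be the language of the regular expression (## 0 0* # 0⁵ (00)* # 0⁵ (00)*)⁺ ##. Then the following six concatenation languages are all disjoint from L_G: Y₁·K·K, K·Y₂·K, K·K·Y₃, Y₁·K·Y₂·K, Y₁·K·K·Y₃, and K·Y₂·K·Y₃. -/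

import Mathlib

open Computability

/-- The binary alphabet `{0, #}`: `false` represents `0`, `true` represents `#`. -/
abbrev Bin := Bool

/-- `u` contains no occurrence of `###` as a factor. -/
def NoTripleHash (u : List Bin) : Prop := ¬ ([true, true, true] <:+: u)

/-- `K = ({00})*`: all words that are concatenations of blocks `00`. -/
def K : Language Bin := ({[false, false]} : Language Bin)∗

/-- `Y₁ = { 0w0#0 : w ∈ Σ*, w has no factor ### }`. -/
def Y1 : Language Bin :=
  {x | ∃ w, NoTripleHash w ∧ x = [false] ++ w ++ [false, true, false]}

/-- `Y₂ = { 0⁴ # 0⁵ 0^{2a} ## 0^{b} # 0⁴ 0^{2+2c} : a ≥ 0, b ≥ 1, c ≥ 1 }`. -/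
def Y2 : Language Bin :=
  {x | ∃ a b c : ℕ, 1 ≤ b ∧ 1 ≤ c ∧
    x = List.replicate 4 false ++ [true] ++ List.replicate 5 false ++
      List.replicate (2 * a) false ++ [true, true] ++ List.replicate b false ++
      [true] ++ List.replicate 4 false ++ List.replicate (2 + 2 * c) false}

/-- `Y₃ = { 0#0w0 : w ∈ Σ*, w has no factor ### }`. -/
def Y3 : Language Bin :=
  {x | ∃ w, NoTripleHash w ∧ x = [false, true, false] ++ w ++ [false]}

/-- The regular expression `0` (a single letter `0`). -/
def rZero : RegularExpression Bin := RegularExpression.char false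

/-- The regular expression `#` (a single letter `#`). -/
def rHash : RegularExpression Bin := RegularExpression.char true

/-- The regular expression `0⁵`. -/
def rZero5 : RegularExpression Bin := rZero * rZero * rZero * rZero * rZero

/-- The regular expression for one block `## 0 0* # 0⁵ (00)* # 0⁵ (00)*`. -/
def rBlock : RegularExpression Bin :=
  rHash * rHash * rZero * rZero.star * rHash * rZero5 * (rZero * rZero).star *
    rHash * rZero5 * (rZero * rZero).star

/-- The language `L_G` of the regular expression `(## 0 0* # 0⁵ (00)* # 0⁵ (00)*)⁺ ##`. -/
def LG : Language Bin := (rBlock * rBlock.star * rHash * rHash).matches'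


/-- Every word in `L` starts with `true`. -/
def HT (L : Language Bin) : Prop := ∀ w ∈ L, w.head? = some true
/-- No word in `L` starts with `true`. -/
def HF (L : Language Bin) : Prop := ∀ w ∈ L, w.head? ≠ some true

lemma HT_mul_left {P Q : Language Bin} (h : HT P) : HT (P * Q) := by
  rintro w hw
  rw [Language.mem_mul] at hw
  obtain ⟨a, ha, b, hb, rfl⟩ := hw
  have := h a ha
  cases a with
  | nil => simp at this
  | cons x t => simpa using this

lemma HF_mul {P Q : Language Bin} (hP : HF P) (hQ : HF Q) : HF (P * Q) := by
  rintro w hw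
  rw [Language.mem_mul] at hw
  obtain ⟨a, ha, b, hb, rfl⟩ := hw
  cases a with
  | nil => simpa using hQ b hb
  | cons x t => simpa using hP _ ha

lemma HT_LG : HT LG := by
  have hhash : HT rHash.matches' := by
    intro w hw
    rw [rHash, RegularExpression.matches'_char] at hw
    replace hw : w = [true] := hw
    simp [hw]
  have hblock : HT rBlock.matches' := by
    simp only [rBlock, RegularExpression.matches'_mul]
    exact HT_mul_left (HT_mul_left (HT_mul_left (HT_mul_left (HT_mul_left
      (HT_mul_left (HT_mul_left (HT_mul_left (HT_mul_left hhash))))))))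
  simp only [LG, RegularExpression.matches'_mul]
  exact HT_mul_left (HT_mul_left (HT_mul_left hblock))

lemma HF_K : HF K := by
  rintro w hw
  rw [K, Language.mem_kstar] at hw
  obtain ⟨L, rfl, hL⟩ := hw
  cases L with
  | nil => simp
  | cons y t =>
      have : y = [false, false] := hL y (by simp)
      subst this; simp

lemma HF_Y1 : HF Y1 := by
  rintro w ⟨u, _, rfl⟩; simp

lemma HF_Y2 : HF Y2 := by
  rintro w ⟨a, b, c, _, _, rfl⟩; simp [List.replicate]

lemma HF_Y3 : HF Y3 := by
  rintro w ⟨u, _, rfl⟩; simp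

lemma disj_of_HF {P : Language Bin} (h : HF P) : Disjoint P LG := by
  apply Set.disjoint_left.mpr
  intro w hwP hwLG
  exact h w hwP (HT_LG w hwLG)

/-- The six concatenation languages arising from partially-erased substitutions of the
counter-increase predicate are all disjoint from `L_G`. -/
theorem predicate_partial_erasures_disjoint_from_LG :
    Disjoint (Y1 * K * K) LG ∧ Disjoint (K * Y2 * K) LG ∧ Disjoint (K * K * Y3) LG ∧
    Disjoint (Y1 * K * Y2 * K) LG ∧ Disjoint (Y1 * K * K * Y3) LG ∧
    Disjoint (K * Y2 * K * Y3) LG := by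
  exact ⟨disj_of_HF (HF_mul (HF_mul HF_Y1 HF_K) HF_K),
   disj_of_HF (HF_mul (HF_mul HF_K HF_Y2) HF_K),
   disj_of_HF (HF_mul (HF_mul HF_K HF_K) HF_Y3),
   disj_of_HF (HF_mul (HF_mul (HF_mul HF_Y1 HF_K) HF_Y2) HF_K),
   disj_of_HF (HF_mul (HF_mul (HF_mul HF_Y1 HF_K) HF_K) HF_Y3),
   disj_of_HF (HF_mul (HF_mul (HF_mul HF_K HF_Y2) HF_K) HF_Y3)⟩
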